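/- Let G be the graph product of a finite simple graph Γ = (V,E) with vertex groups (G_v)_{v∈V}, and let A, B ⊆ V each span a complete subgraph of Γ. If x ∈ G(A) and x is conjugate in G to some element y ∈ G(B), then x ∈ G(A ∩ B). -/

import Mathlib

open Monoid

/-- The set of commutator relators defining a graph product. -/
def graphProdRels {V : Type*} (Γ : SimpleGraph V) (G : V → Type*) [∀ v, Group (G v)] :
    Set (CoprodI G) :=
  {x | ∃ (u v : V) (_ : Γ.Adj u v) (g : G u) (h : G v),
    x = (CoprodI.of g)⁻¹ * (CoprodI.of h)⁻¹ * CoprodI.of g * CoprodI.of h}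

/-- The graph product of the graph of groups `(Γ, G)`: the quotient of the free product of the
vertex groups by the normal closure of the commutators of elements of pairs of adjacent vertex
groups. -/
def GraphProduct {V : Type*} (Γ : SimpleGraph V) (G : V → Type*) [∀ v, Group (G v)] : Type _ :=
  CoprodI G ⧸ Subgroup.normalClosure (graphProdRels Γ G)

instance {V : Type*} (Γ : SimpleGraph V) (G : V → Type*) [∀ v, Group (G v)] :
    Group (GraphProduct Γ G) :=
  QuotientGroup.Quotient.group _

/-- The canonical map from a vertex group into the graph product. -/
def GraphProduct.of {V : Type*} (Γ : SimpleGraph V) (G : V → Type*) [∀ v, Group (G v)] (v : V) :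
    G v →* GraphProduct Γ G :=
  (QuotientGroup.mk' _).comp CoprodI.of

/-- `G(A)`: the subgroup of the graph product generated by the images of the vertex groups
`G_a`, `a ∈ A`. -/
def GraphProduct.vsub {V : Type*} (Γ : SimpleGraph V) (G : V → Type*) [∀ v, Group (G v)]
    (A : Set V) : Subgroup (GraphProduct Γ G) :=
  ⨆ a ∈ A, (GraphProduct.of Γ G a).range

section Aux

variable {V : Type*} (Γ : SimpleGraph V) (G : V → Type*) [∀ v, Group (G v)]

/-- Cast homomorphism between equal vertex groups. -/
def GPcastHom {u v : V} (h : u = v) : G u →* G v :=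
  @Eq.rec V u (fun w _ => G u →* G w) (MonoidHom.id (G u)) v h

@[simp] lemma GPcastHom_rfl {u : V} : GPcastHom G (rfl : u = u) = MonoidHom.id (G u) := rfl

/-- Projection at the level of the free product. -/
def GPprojAux [DecidableEq V] (v : V) : CoprodI G →* G v :=
  CoprodI.lift fun w => if h : w = v then GPcastHom G h else 1

@[simp] lemma GPprojAux_of_self [DecidableEq V] (v : V) (g : G v) :
    GPprojAux G v (CoprodI.of g) = g := by
  simp [GPprojAux, CoprodI.lift_of]

@[simp] lemma GPprojAux_of_ne [DecidableEq V] {v w : V} (h : w ≠ v) (g : G w) :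
    GPprojAux G v (CoprodI.of g) = 1 := by
  simp [GPprojAux, CoprodI.lift_of, h]

lemma GPprojAux_rels [DecidableEq V] (v : V) :
    Subgroup.normalClosure (graphProdRels Γ G) ≤ (GPprojAux G v).ker := by
  apply Subgroup.normalClosure_le_normal
  rintro x ⟨u, w, hadj, g, h, rfl⟩
  have huw : u ≠ w := Γ.ne_of_adj hadj
  simp only [SetLike.mem_coe, MonoidHom.mem_ker, map_mul, map_inv]
  by_cases hu : u = v
  · subst hu
    rw [GPprojAux_of_self, GPprojAux_of_ne G (fun hh => huw hh.symm)]
    group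
  · rw [GPprojAux_of_ne G hu]
    by_cases hw : w = v
    · subst hw; rw [GPprojAux_of_self]; group
    · rw [GPprojAux_of_ne G hw]; group

/-- Projection from the graph product to a vertex group. -/
def GPproj [DecidableEq V] (v : V) : GraphProduct Γ G →* G v :=
  QuotientGroup.lift _ (GPprojAux G v) (GPprojAux_rels Γ G v)

@[simp] lemma GPproj_of_self [DecidableEq V] (v : V) (g : G v) :
    GPproj Γ G v (GraphProduct.of Γ G v g) = g := GPprojAux_of_self G v g

@[simp] lemma GPproj_of_ne [DecidableEq V] {v w : V} (h : w ≠ v) (g : G w) :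
    GPproj Γ G v (GraphProduct.of Γ G w g) = 1 := GPprojAux_of_ne G h g

open scoped commutatorElement in
lemma GP_commute {u v : V} (h : Γ.Adj u v) (g : G u) (k : G v) :
    Commute (GraphProduct.of Γ G u g) (GraphProduct.of Γ G v k) := by
  have hmem : ((CoprodI.of g)⁻¹ * (CoprodI.of k)⁻¹ * CoprodI.of g * CoprodI.of k : CoprodI G)
      ∈ Subgroup.normalClosure (graphProdRels Γ G) :=
    Subgroup.subset_normalClosure ⟨u, v, h, g, k, rfl⟩
  have h1 : (QuotientGroup.mk ((CoprodI.of g)⁻¹ * (CoprodI.of k)⁻¹ * CoprodI.of g * CoprodI.of k :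
      CoprodI G) : GraphProduct Γ G) = 1 := (QuotientGroup.eq_one_iff _).2 hmem
  have h2 : (GraphProduct.of Γ G u g)⁻¹ * (GraphProduct.of Γ G v k)⁻¹ *
      GraphProduct.of Γ G u g * GraphProduct.of Γ G v k = 1 := h1
  have h4 : ⁅(GraphProduct.of Γ G u g)⁻¹, (GraphProduct.of Γ G v k)⁻¹⁆ = 1 := by
    rw [commutatorElement_def, inv_inv, inv_inv]; exact h2
  simpa using (commutatorElement_eq_one_iff_commute.mp h4).inv_left.inv_right

end Aux

/-- Let `A, B ⊆ V` each span a complete subgraph.  If `x ∈ G(A)` is conjugate to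
an element `y ∈ G(B)`, then `x ∈ G(A ∩ B)`. -/
theorem graphProduct_conj_complete {V : Type*} [Fintype V] (Γ : SimpleGraph V)
    (G : V → Type*) [∀ v, Group (G v)] (A B : Set V)
    (hA : A.Pairwise Γ.Adj) (hB : B.Pairwise Γ.Adj)
    (x y : GraphProduct Γ G) (hx : x ∈ GraphProduct.vsub Γ G A)
    (hy : y ∈ GraphProduct.vsub Γ G B)
    (hconj : ∃ g : GraphProduct Γ G, g * y * g⁻¹ = x) :
    x ∈ GraphProduct.vsub Γ G (A ∩ B) := by
  classical
  obtain ⟨g, hg⟩ := hconj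
  -- the family of inclusions of vertex groups of `A`
  set ϕ : ∀ a : A, G a →* GraphProduct Γ G := fun a => GraphProduct.of Γ G a with hϕ
  have hcomm : Pairwise fun a b : A => ∀ g k, Commute (ϕ a g) (ϕ b k) := by
    intro a b hab gg kk
    exact GP_commute Γ G (hA a.2 b.2 (fun hh => hab (Subtype.ext hh))) gg kk
  set P : GraphProduct Γ G →* ∀ a : A, G a :=
    Pi.monoidHom (fun a : A => GPproj Γ G a) with hP
  set Φ : GraphProduct Γ G →* GraphProduct Γ G :=
    (MonoidHom.noncommPiCoprod ϕ hcomm).comp P with hΦ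
  -- Φ is the identity on vsub A
  have hPsingle : ∀ (a : A) (gg : G a),
      P (GraphProduct.of Γ G a gg) = Pi.mulSingle a gg := by
    intro a gg
    funext b
    by_cases hba : b = a
    · subst hba
      simp [hP, Pi.monoidHom]
    · have : (a : V) ≠ (b : V) := fun hh => hba (Subtype.ext hh.symm)
      simp [hP, Pi.monoidHom, GPproj_of_ne Γ G this, Pi.mulSingle_eq_of_ne hba]
  have hΦid : ∀ z ∈ GraphProduct.vsub Γ G A, Φ z = z := by
    intro z hz
    rw [GraphProduct.vsub, iSup_subtype'] at hz
    refine Subgroup.iSup_induction _ (C := fun z => Φ z = z) hz ?_ (map_one Φ) ?_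
    · rintro a _ ⟨gg, rfl⟩
      rw [hΦ, MonoidHom.comp_apply, hPsingle a gg, MonoidHom.noncommPiCoprod_mulSingle]
    · intro z w hz hw
      rw [map_mul, hz, hw]
  -- projections to vertices outside B kill y
  have hkill : ∀ a : V, a ∉ B → GPproj Γ G a y = 1 := by
    intro a haB
    have hle : GraphProduct.vsub Γ G B ≤ (GPproj Γ G a).ker := by
      refine iSup₂_le fun b hb => ?_
      rintro _ ⟨k, rfl⟩
      exact GPproj_of_ne Γ G (fun hh => haB (by rw [← hh]; exact hb)) k
    exact hle hy
  have hxproj : ∀ a : V, a ∉ B → GPproj Γ G a x = 1 := by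
    intro a haB
    rw [← hg]
    simp [map_mul, hkill a haB]
  -- conclude
  have hx' : x = Φ x := (hΦid x hx).symm
  rw [hx']
  have hΦx : Φ x = Finset.univ.noncommProd (fun a : A => ϕ a (P x a))
      (fun a _ b _ h => hcomm h _ _) := rfl
  rw [hΦx]
  refine Subgroup.noncommProd_mem _ _ ?_
  intro a _
  by_cases haB : (a : V) ∈ B
  · have hle : (GraphProduct.of Γ G a).range ≤ GraphProduct.vsub Γ G (A ∩ B) := by
      refine le_iSup₂_of_le (a : V) ⟨a.2, haB⟩ le_rfl
    exact hle ⟨P x a, rfl⟩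
  · have : P x a = 1 := hxproj a haB
    rw [this, map_one]
    exact Subgroup.one_mem _
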